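/- For three mutually tangent circles of radii e^{u1}, e^{u2}, e^{u3}, the inner angle function Θ(x1,x2) (with x1 = u2−u1, x2 = u3−u1) satisfies: if (x1, x2) is replaced along the straight segment f(t) = ((1−t)·a + t·b) for a, b ∈ ℝ², then Θ(b) − Θ(a) = ∫₀¹ ∇Θ(f(t)) · (b − a) dt, with both partial derivatives of Θ strictly positive everywhere; consequently Θ is strictly increasing in each variable. -/

import Mathlib

open Real

/-- The angle function `Θ` as a function on `ℝ × ℝ`. -/
noncomputable def ThetaP (p : ℝ × ℝ) : ℝ :=
  Real.arccos (((1 + Real.exp p.1) ^ 2 + (1 + Real.exp p.2) ^ 2 -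
      (Real.exp p.1 + Real.exp p.2) ^ 2) /
    (2 * (1 + Real.exp p.1) * (1 + Real.exp p.2)))

noncomputable def Qarg (p : ℝ × ℝ) : ℝ :=
  ((1 + Real.exp p.1) ^ 2 + (1 + Real.exp p.2) ^ 2 -
      (Real.exp p.1 + Real.exp p.2) ^ 2) /
    (2 * (1 + Real.exp p.1) * (1 + Real.exp p.2))

lemma Qarg_mem (p : ℝ × ℝ) : Qarg p ∈ Set.Ioo (-1 : ℝ) 1 := by
  have ha := Real.exp_pos p.1
  have hb := Real.exp_pos p.2
  set a := Real.exp p.1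
  set b := Real.exp p.2
  have hD : (0:ℝ) < 2 * (1 + a) * (1 + b) := by positivity
  simp only [Qarg]
  constructor
  · rw [lt_div_iff₀ hD]; nlinarith
  · rw [div_lt_one hD]; nlinarith

lemma Qarg_contDiff : ContDiff ℝ 1 Qarg := by
  apply ContDiff.div
  · fun_prop
  · fun_prop
  · intro p
    have ha := Real.exp_pos p.1
    have hb := Real.exp_pos p.2
    positivity

lemma Theta_contDiff : ContDiff ℝ 1 ThetaP := by
  rw [contDiff_iff_contDiffAt]
  intro p
  have h := Qarg_mem p
  exact (Real.contDiffAt_arccos (ne_of_gt h.1) (ne_of_lt h.2)).comp p Qarg_contDiff.contDiffAt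

lemma hasDerivAt_theta1 (x1 x2 : ℝ) :
    ∃ d : ℝ, 0 < d ∧ HasDerivAt (fun s => ThetaP (s, x2)) d x1 := by
  have ha := Real.exp_pos x1
  have hb := Real.exp_pos x2
  set a := Real.exp x1 with ha_def
  set b := Real.exp x2 with hb_def
  have hD0 : ∀ s : ℝ, 2 * (1 + Real.exp s) * (1 + b) ≠ 0 := by
    intro s
    have := Real.exp_pos s
    positivity
  have he : HasDerivAt Real.exp a x1 := Real.hasDerivAt_exp x1
  have h1 : HasDerivAt (fun s => 1 + Real.exp s) a x1 := he.const_add 1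
  have hN : HasDerivAt
      (fun s => (1 + Real.exp s) ^ 2 + (1 + b) ^ 2 - (Real.exp s + b) ^ 2)
      ((2:ℕ) * (1 + a) ^ 1 * a - (2:ℕ) * (a + b) ^ 1 * a) x1 :=
    ((h1.pow 2).add_const _).sub ((he.add_const b).pow 2)
  have hD : HasDerivAt (fun s => 2 * (1 + Real.exp s) * (1 + b))
      (2 * a * (1 + b)) x1 := (h1.const_mul 2).mul_const (1 + b)
  have hr : HasDerivAt (fun s => Qarg (s, x2))
      ((((2:ℕ) * (1 + a) ^ 1 * a - (2:ℕ) * (a + b) ^ 1 * a) * (2 * (1 + a) * (1 + b)) -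
        ((1 + a) ^ 2 + (1 + b) ^ 2 - (a + b) ^ 2) * (2 * a * (1 + b))) /
        (2 * (1 + a) * (1 + b)) ^ 2) x1 := hN.div hD (hD0 x1)
  have hmem := Qarg_mem (x1, x2)
  set r := Qarg (x1, x2) with hr_def
  set r' := (((2:ℕ) * (1 + a) ^ 1 * a - (2:ℕ) * (a + b) ^ 1 * a) * (2 * (1 + a) * (1 + b)) -
        ((1 + a) ^ 2 + (1 + b) ^ 2 - (a + b) ^ 2) * (2 * a * (1 + b))) /
        (2 * (1 + a) * (1 + b)) ^ 2 with hr'_def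
  have hcomp : HasDerivAt (fun s => ThetaP (s, x2)) (-(1 / Real.sqrt (1 - r ^ 2)) * r') x1 :=
    (Real.hasDerivAt_arccos (ne_of_gt hmem.1) (ne_of_lt hmem.2)).comp x1 hr
  refine ⟨_, ?_, hcomp⟩
  have hs : 0 < Real.sqrt (1 - r ^ 2) := by
    apply Real.sqrt_pos.2
    nlinarith [hmem.1, hmem.2]
  have hr'neg : r' < 0 := by
    rw [hr'_def]
    apply div_neg_of_neg_of_pos
    · have : ((2:ℕ) * (1 + a) ^ 1 * a - (2:ℕ) * (a + b) ^ 1 * a) * (2 * (1 + a) * (1 + b)) -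
        ((1 + a) ^ 2 + (1 + b) ^ 2 - (a + b) ^ 2) * (2 * a * (1 + b)) = -8 * a * b * (1 + b) := by
        push_cast; ring
      rw [this]; nlinarith [mul_pos ha hb, mul_pos (mul_pos ha hb) hb]
    · positivity
  have : 0 < -(1 / Real.sqrt (1 - r ^ 2)) * r' := by
    have h1 : 0 < 1 / Real.sqrt (1 - r ^ 2) := by positivity
    nlinarith
  exact this

lemma ThetaP_swap (x y : ℝ) : ThetaP (x, y) = ThetaP (y, x) := by
  simp only [ThetaP]
  congr 1
  ring

theorem stmt_10 :
    (∀ p : ℝ × ℝ, 0 < deriv (fun s => ThetaP (s, p.2)) p.1 ∧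
        0 < deriv (fun s => ThetaP (p.1, s)) p.2) ∧
    (∀ a b : ℝ × ℝ,
        ThetaP b - ThetaP a = ∫ t in (0:ℝ)..1, fderiv ℝ ThetaP (a + t • (b - a)) (b - a)) ∧
    (∀ x2 : ℝ, StrictMono fun x1 => ThetaP (x1, x2)) ∧
    (∀ x1 : ℝ, StrictMono fun x2 => ThetaP (x1, x2)) := by
  have key : ∀ x1 x2 : ℝ, 0 < deriv (fun s => ThetaP (s, x2)) x1 := by
    intro x1 x2
    obtain ⟨d, hd, hder⟩ := hasDerivAt_theta1 x1 x2
    rwa [hder.deriv]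
  have key2 : ∀ x1 x2 : ℝ, 0 < deriv (fun s => ThetaP (x1, s)) x2 := by
    intro x1 x2
    have : (fun s => ThetaP (x1, s)) = fun s => ThetaP (s, x1) := by
      funext s; exact ThetaP_swap x1 s
    rw [this]
    exact key x2 x1
  refine ⟨fun p => ⟨key p.1 p.2, key2 p.1 p.2⟩, ?_, ?_, ?_⟩
  · intro a b
    have hL : ∀ t : ℝ, HasDerivAt (fun t : ℝ => a + t • (b - a)) (b - a) t := by
      intro t
      have h : HasDerivAt (fun t : ℝ => t • (b - a)) ((1:ℝ) • (b - a)) t :=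
        (hasDerivAt_id t).smul_const (b - a)
      rw [one_smul] at h
      exact h.const_add a
    have hg : ∀ t : ℝ, HasDerivAt (fun t : ℝ => ThetaP (a + t • (b - a)))
        (fderiv ℝ ThetaP (a + t • (b - a)) (b - a)) t := by
      intro t
      exact ((Theta_contDiff.differentiable one_ne_zero (a + t • (b - a))).hasFDerivAt).comp_hasDerivAt
        t (hL t)
    have hcont : Continuous fun t : ℝ => fderiv ℝ ThetaP (a + t • (b - a)) (b - a) := by
      have h1 : Continuous (fderiv ℝ ThetaP) := Theta_contDiff.continuous_fderiv one_ne_zero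
      have h2 : Continuous fun t : ℝ => a + t • (b - a) := by fun_prop
      exact (h1.comp h2).clm_apply continuous_const
    have := intervalIntegral.integral_eq_sub_of_hasDerivAt (f := fun t : ℝ => ThetaP (a + t • (b - a)))
      (fun t _ => hg t) (hcont.intervalIntegrable 0 1)
    rw [this]
    simp
  · intro x2
    exact strictMono_of_deriv_pos fun x => key x x2
  · intro x1
    exact strictMono_of_deriv_pos fun x => key2 x1 x
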